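/- Let u : Γ₁ → Γ be a group homomorphism inducing an isomorphism of profinite completions, i.e. for every finite group F the map Hom(Γ, F) → Hom(Γ₁, F), φ ↦ φ ∘ u, is bijective. Let M be a finite-index subgroup of Γ and M₁ = u⁻¹(M). Then the restriction of u to M₁, viewed as a homomorphism M₁ → M, also induces an isomorphism of profinite completions: for every finite group F the map Hom(M, F) → Hom(M₁, F), ψ ↦ ψ ∘ (u restricted to M₁), is bijective. -/

import Mathlib

open Subgroup

section
variable {Γ₁ Γ : Type} [Group Γ₁] [Group Γ] (u : Γ₁ →* Γ)

lemma lemA' (hu : ∀ (F : Type) [Group F] [Finite F],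
      Function.Injective (fun φ : Γ →* F => φ.comp u))
    (U : Subgroup Γ) [U.FiniteIndex] (hU : u.range ≤ U) : U = ⊤ := by
  classical
  set X := Γ ⧸ U with hX
  set x₀ : X := QuotientGroup.mk 1 with hx₀
  have hfix : ∀ g : Γ, g • x₀ = x₀ ↔ g ∈ U := by
    intro g
    have h1 : g • x₀ = (QuotientGroup.mk (g * 1) : X) := rfl
    rw [h1, hx₀, QuotientGroup.eq]
    constructor
    · intro h; simpa using inv_mem h
    · intro h; simpa using inv_mem h
  have hinv : Function.Involutive (fun p : X × Bool => (p.1, xor (decide (p.1 = x₀)) p.2)) := by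
    intro p; simp [← Bool.xor_assoc]
  let τ : Equiv.Perm (X × Bool) := hinv.toPerm _
  have hτ : ∀ p : X × Bool, τ p = (p.1, xor (decide (p.1 = x₀)) p.2) := fun p => rfl
  have hττ : τ⁻¹ = τ := by
    ext p
    · rfl
    · rfl
  let φ₁ : Γ →* Equiv.Perm (X × Bool) :=
    { toFun := fun g => (MulAction.toPermHom Γ X g).prodCongr (Equiv.refl Bool)
      map_one' := by ext p <;> simp
      map_mul' := by intro a b; ext p <;> simp [mul_smul] }
  have hφ₁ : ∀ (g : Γ) (p : X × Bool), φ₁ g p = (g • p.1, p.2) := fun g p => rfl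
  let φ₂ : Γ →* Equiv.Perm (X × Bool) := (MulAut.conj τ).toMonoidHom.comp φ₁
  have hφ₂ : ∀ (g : Γ) (p : X × Bool),
      φ₂ g p = (g • p.1, xor (decide (g • p.1 = x₀)) (xor (decide (p.1 = x₀)) p.2)) := by
    intro g p
    show (τ * φ₁ g * τ⁻¹) p = _
    rw [hττ]
    simp only [Equiv.Perm.mul_apply, hτ, hφ₁]
  have h12 : φ₁.comp u = φ₂.comp u := by
    refine MonoidHom.ext fun g₁ => Equiv.ext fun p => ?_
    have hg : u g₁ ∈ U := hU ⟨g₁, rfl⟩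
    show φ₁ (u g₁) p = φ₂ (u g₁) p
    rw [hφ₁, hφ₂]
    have hmem : u g₁ • p.1 = x₀ ↔ p.1 = x₀ := by
      constructor
      · intro h
        have := congrArg (fun y => (u g₁)⁻¹ • y) h
        simp only [smul_smul, inv_mul_cancel, one_smul] at this
        rw [this]; exact (hfix _).mpr (inv_mem hg)
      · rintro h; rw [h]; exact (hfix _).mpr hg
    refine Prod.ext rfl ?_
    by_cases h : p.1 = x₀
    · simp [h, (hfix _).mpr hg]
    · simp [h, (hmem.not).mpr h]
  have heq : φ₁ = φ₂ := hu _ h12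
  ext g
  simp only [mem_top, iff_true]
  have h2 := congrArg (fun σ : Equiv.Perm (X × Bool) => σ (x₀, true))
    (congrArg (fun φ : Γ →* Equiv.Perm (X × Bool) => φ g) heq)
  simp only [hφ₁, hφ₂] at h2
  have h3 := congrArg Prod.snd h2
  simp at h3
  rw [← hfix g]
  exact h3

section
variable (hu : ∀ (F : Type) [Group F] [Finite F],
      Function.Injective (fun φ : Γ →* F => φ.comp u))

include hu

lemma lemA (A : Subgroup Γ) [A.FiniteIndex] (g : Γ) : ∃ g₁ : Γ₁, (u g₁)⁻¹ * g ∈ A := by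
  have hN : A.normalCore.FiniteIndex := inferInstance
  let U : Subgroup Γ := u.range ⊔ A.normalCore
  have hUf : U.FiniteIndex := by
    constructor
    have := Subgroup.index_dvd_of_le (le_sup_right : A.normalCore ≤ U)
    intro h
    rw [h] at this
    exact hN.index_ne_zero (Nat.eq_zero_of_zero_dvd this)
  have hUtop : U = ⊤ := lemA' u hu U le_sup_left
  have hg : g ∈ U := hUtop ▸ mem_top g
  have hg2 : g ∈ (↑(u.range ⊔ A.normalCore) : Set Γ) := hg
  rw [Subgroup.mul_normal] at hg2
  obtain ⟨a, ⟨g₁, rfl⟩, n, hn, rfl⟩ := hg2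
  exact ⟨g₁, by simpa using A.normalCore_le hn⟩

lemma lemB (A : Subgroup Γ) [A.FiniteIndex] : (A.comap u).index = A.index := by
  rw [Subgroup.index_eq_card, Subgroup.index_eq_card]
  refine Nat.card_eq_of_bijective
    (Quotient.map' u (fun a b (h : (QuotientGroup.leftRel _).r a b) => ?_)) ⟨?_, ?_⟩
  · rw [QuotientGroup.leftRel_apply] at h ⊢
    simpa using h
  · intro x y h
    induction x using Quotient.inductionOn'
    induction y using Quotient.inductionOn'
    rw [Quotient.map'_mk'', Quotient.map'_mk''] at h
    apply Quotient.sound'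
    rw [QuotientGroup.leftRel_apply]
    have := Quotient.exact' h
    rw [QuotientGroup.leftRel_apply] at this
    simpa using this
  · intro y
    induction y using Quotient.inductionOn' with
    | h g =>
      obtain ⟨g₁, hg₁⟩ := lemA u hu A g
      exact ⟨Quotient.mk'' g₁, by
        rw [Quotient.map'_mk'']
        exact (Quotient.sound' (by rwa [QuotientGroup.leftRel_apply]))⟩

lemma lemC (A B : Subgroup Γ) (hA : A.FiniteIndex) (hB : B.FiniteIndex) (h : A ≤ B)
    (hc : A.comap u = B.comap u) : A = B := by
  have hi : A.index = B.index := by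
    rw [← lemB u hu A, ← lemB u hu B, hc]
  have := Subgroup.relIndex_mul_index h
  rw [hi] at this
  have h1 : A.relIndex B = 1 := by
    have h2 : A.relIndex B * B.index = 1 * B.index := by rw [one_mul, this]
    exact Nat.eq_of_mul_eq_mul_right (Nat.pos_of_ne_zero hB.index_ne_zero) h2
  exact le_antisymm h (Subgroup.relIndex_eq_one.mp h1)

end
end

lemma finiteIndex_of_le' {G : Type} [Group G] {A B : Subgroup G} (h : A ≤ B)
    (hA : A.FiniteIndex) : B.FiniteIndex := by
  constructor
  intro h0
  have := Subgroup.index_dvd_of_le h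
  rw [h0] at this
  exact hA.index_ne_zero (Nat.eq_zero_of_zero_dvd this)

lemma finiteIndex_map_subtype {G : Type} [Group G] (H : Subgroup G) [H.FiniteIndex]
    (K : Subgroup H) (hK : K.FiniteIndex) : (K.map H.subtype).FiniteIndex := by
  constructor
  have hle : K.map H.subtype ≤ H := Subgroup.map_subtype_le K
  have h1 : (K.map H.subtype).relIndex H * H.index = (K.map H.subtype).index :=
    Subgroup.relIndex_mul_index hle
  have h2 : (K.map H.subtype).relIndex H = K.index := by
    unfold Subgroup.relIndex
    rw [Subgroup.subgroupOf, Subgroup.comap_map_eq_self_of_injective H.subtype_injective]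
  rw [← h1, h2]
  exact Nat.mul_ne_zero hK.index_ne_zero Subgroup.FiniteIndex.index_ne_zero

/-- Let `u : Γ₁ → Γ` induce an isomorphism of profinite completions,
`M ≤ Γ` of finite index, `M₁ = u⁻¹(M)`.  Then the restriction `M₁ → M` of `u` also
induces an isomorphism of profinite completions. -/
theorem restrict_profinite_iso {Γ₁ Γ : Type} [Group Γ₁] [Group Γ] (u : Γ₁ →* Γ)
    (hu : ∀ (F : Type) [Group F] [Finite F],
      Function.Bijective (fun φ : Γ →* F => φ.comp u))
    (M : Subgroup Γ) (hM : M.FiniteIndex) :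
    ∀ (F : Type) [Group F] [Finite F],
      Function.Bijective (fun ψ : M →* F =>
        ψ.comp ((u.domRestrict (M.comap u)).codRestrict M fun x => x.2)) := by
  classical
  have huinj : ∀ (F : Type) [Group F] [Finite F],
      Function.Injective (fun φ : Γ →* F => φ.comp u) := fun F _ _ => (hu F).1
  haveI hMfi : M.FiniteIndex := hM
  set M₁ : Subgroup Γ₁ := M.comap u with hM₁
  set r : M₁ →* M := (u.domRestrict M₁).codRestrict M fun x => x.2 with hr
  have hrval : ∀ m₁ : M₁, (r m₁ : Γ) = u ↑m₁ := fun m₁ => rfl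
  haveI hM₁fi : M₁.FiniteIndex := ⟨by rw [lemB u huinj M]; exact hM.index_ne_zero⟩
  intro F _ _
  constructor
  · -- injectivity
    intro ψ ψ' h
    simp only at h
    let E : Subgroup M := ψ.eqLocus ψ'
    let D : Subgroup Γ := E.map M.subtype
    have hDle : D ≤ M := Subgroup.map_subtype_le E
    have hEfi : E.FiniteIndex := by
      refine finiteIndex_of_le' (A := ψ.ker ⊓ ψ'.ker) ?_ inferInstance
      rintro x ⟨hx, hx'⟩
      show ψ x = ψ' x
      rw [hx, hx']
    haveI hDfi : D.FiniteIndex := finiteIndex_map_subtype M E hEfi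
    have hcom : D.comap u = M.comap u := by
      apply le_antisymm (Subgroup.comap_mono hDle)
      intro g₁ hg₁
      have hmem : u g₁ ∈ M := hg₁
      refine ⟨⟨u g₁, hmem⟩, ?_, rfl⟩
      have := DFunLike.congr_fun h (⟨g₁, hg₁⟩ : M₁)
      simp only [MonoidHom.comp_apply] at this
      have hrm : r ⟨g₁, hg₁⟩ = ⟨u g₁, hmem⟩ := rfl
      rw [hrm] at this
      exact this
    have hDM : D = M := lemC u huinj D M hDfi hM hDle hcom
    refine MonoidHom.ext fun m => ?_
    have hmD : (m : Γ) ∈ D := by rw [hDM]; exact m.2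
    obtain ⟨e, he, heq⟩ := hmD
    have : e = m := Subtype.ext heq
    rw [← this]
    exact he
  · -- surjectivity
    intro ψ₁
    let K₁ : Subgroup Γ₁ := ψ₁.ker.map M₁.subtype
    haveI hK₁fi : K₁.FiniteIndex := finiteIndex_map_subtype M₁ ψ₁.ker inferInstance
    let N₁ : Subgroup Γ₁ := K₁.normalCore
    haveI : N₁.Normal := Subgroup.normalCore_normal K₁
    haveI : N₁.FiniteIndex := Subgroup.finiteIndex_normalCore K₁
    have hN₁M₁ : N₁ ≤ M₁ := K₁.normalCore_le.trans (Subgroup.map_subtype_le _)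
    let π₁ : Γ₁ →* Γ₁ ⧸ N₁ := QuotientGroup.mk' N₁
    -- well-definedness of descending ψ₁ along π₁
    have hwd : ∀ a b : M₁, π₁ ↑a = π₁ ↑b → ψ₁ a = ψ₁ b := by
      intro a b hab
      rw [QuotientGroup.mk'_eq_mk'] at hab
      obtain ⟨z, hz, hz2⟩ := hab
      obtain ⟨k, hk, hkz⟩ := K₁.normalCore_le hz
      have hb : b = a * k := by
        apply Subtype.ext
        rw [← hz2, ← hkz]
        rfl
      rw [hb, map_mul, hk, mul_one]
    obtain ⟨φ, hφ⟩ := (hu (Γ₁ ⧸ N₁)).2 π₁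
    simp only at hφ
    have hφu : ∀ g₁ : Γ₁, φ (u g₁) = π₁ g₁ := fun g₁ => DFunLike.congr_fun hφ g₁
    let V : Subgroup Γ := (M₁.map π₁).comap φ
    have hVcomap : V.comap u = M₁ := by
      ext g₁
      simp only [Subgroup.mem_comap]
      constructor
      · rintro ⟨x, hx, hxe⟩
        rw [hφu, QuotientGroup.mk'_eq_mk'] at hxe
        obtain ⟨z, hz, rfl⟩ := hxe
        exact mul_mem hx (hN₁M₁ hz)
      · intro hg₁
        exact ⟨g₁, hg₁, (hφu g₁).symm⟩
    haveI hVfi : V.FiniteIndex := finiteIndex_of_le' (A := φ.ker)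
      (fun x hx => by
        simp only [Subgroup.mem_comap, V]
        rw [show φ x = 1 from hx]
        exact one_mem _) inferInstance
    have hMV : M ≤ V := by
      have hinf : (M ⊓ V).comap u = M.comap u := by
        rw [Subgroup.comap_inf, hVcomap, ← hM₁, inf_idem]
      have := lemC u huinj (M ⊓ V) M inferInstance hM inf_le_left hinf
      exact inf_eq_left.mp this
    have hc : ∀ m : M, ∃ m₁ : M₁, π₁ ↑m₁ = φ ↑m := by
      intro m
      have : φ ↑m ∈ M₁.map π₁ := hMV m.2
      obtain ⟨x, hx, hxe⟩ := this
      exact ⟨⟨x, hx⟩, hxe⟩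
    let c : M → M₁ := fun m => (hc m).choose
    have hcspec : ∀ m : M, π₁ ↑(c m) = φ ↑m := fun m => (hc m).choose_spec
    let ψ : M →* F :=
      { toFun := fun m => ψ₁ (c m)
        map_one' := by
          show ψ₁ (c 1) = 1
          have h1 : ψ₁ (c 1) = ψ₁ 1 := by
            apply hwd
            rw [hcspec]
            simp
          rw [h1, map_one]
        map_mul' := by
          intro a b
          show ψ₁ (c (a * b)) = ψ₁ (c a) * ψ₁ (c b)
          have h1 : ψ₁ (c (a * b)) = ψ₁ (c a * c b) := by
            apply hwd
            rw [hcspec]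
            push_cast
            rw [map_mul, map_mul, hcspec, hcspec]
          rw [h1, map_mul] }
    refine ⟨ψ, ?_⟩
    simp only
    ext m₁
    show ψ₁ (c (r m₁)) = ψ₁ m₁
    apply hwd
    rw [hcspec, hrval, hφu]
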